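/- Suppose V : D → ℝ is continuous on an open set D ⊆ ℝⁿ containing 0, V(0) = 0, V(x) > 0 for x ≠ 0, and along every solution x(t) of ẋ = f(x) with x(t) ≠ 0, V(x(t)) is strictly decreasing (V is continuously differentiable off a measure-zero set and its Dini/Clarke derivative along f is negative). Then the origin is an asymptotically stable equilibrium of ẋ = f(x), assuming f(0) = 0 and f is locally Lipschitz. -/

import Mathlib

open Filter Topology

variable {E : Type*} [NormedAddCommGroup E] [NormedSpace ℝ E]

/-- Along any global-in-`D` solution, `V` is nonincreasing on `[0, ∞)`. -/
lemma lyap_mono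
    (D : Set E) (hD : IsOpen D)
    (f : E → E) (V : E → ℝ)
    (hVc : ContinuousOn V D) (hV0 : V 0 = 0)
    (hdec : ∀ x : ℝ → E,
      (∀ t, 0 ≤ t → x t ∈ D) → (∀ t, 0 ≤ t → HasDerivAt x (f (x t)) t) →
      ∀ s t, 0 ≤ s → s < t → x s ≠ 0 → V (x t) < V (x s))
    (x : ℝ → E) (hxD : ∀ t, 0 ≤ t → x t ∈ D)
    (hx' : ∀ t, 0 ≤ t → HasDerivAt x (f (x t)) t) :
    ∀ s t, 0 ≤ s → s ≤ t → V (x t) ≤ V (x s) := by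
  intro s t hs hst
  rcases eq_or_lt_of_le hst with rfl | hlt
  · exact le_rfl
  rcases eq_or_ne (x s) 0 with h0 | h0
  swap
  · exact (hdec x hxD hx' s t hs hlt h0).le
  by_contra hgt
  push_neg at hgt
  rw [h0, hV0] at hgt
  set c := V (x t) with hc
  have hcont : ContinuousOn (fun τ => V (x τ)) (Set.Icc s t) := by
    intro τ hτ
    exact (((hVc.continuousAt (hD.mem_nhds (hxD τ (hs.trans hτ.1)))).comp
      (hx' τ (hs.trans hτ.1)).continuousAt)).continuousWithinAt
  have hmem : c / 2 ∈ Set.Icc (V (x s)) (V (x t)) := by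
    rw [h0, hV0]
    constructor <;> linarith
  obtain ⟨τ, hτI, hτv⟩ := intermediate_value_Icc hst hcont hmem
  have hτt : τ < t := by
    rcases lt_or_eq_of_le hτI.2 with h | rfl
    · exact h
    · simp only at hτv; rw [← hc] at hτv; linarith
  simp only at hτv
  have hxτ : x τ ≠ 0 := by
    intro h
    rw [h, hV0] at hτv
    linarith
  have := hdec x hxD hx' τ t (hs.trans hτI.1) hτt hxτ
  rw [hτv] at this
  linarith

lemma lyap_attract [ProperSpace E]
    (D : Set E) (hD : IsOpen D)
    (f : E → E)
    (hfl : ∀ x ∈ D, ∃ (L : NNReal) (U : Set E), U ∈ 𝓝 x ∧ LipschitzOnWith L f U)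
    (V : E → ℝ)
    (hVc : ContinuousOn V D) (hV0 : V 0 = 0)
    (hVpos : ∀ x ∈ D, x ≠ 0 → 0 < V x)
    (hdec : ∀ x : ℝ → E,
      (∀ t, 0 ≤ t → x t ∈ D) → (∀ t, 0 ≤ t → HasDerivAt x (f (x t)) t) →
      ∀ s t, 0 ≤ s → s < t → x s ≠ 0 → V (x t) < V (x s))
    (r : ℝ) (hrD : Metric.closedBall 0 r ⊆ D)
    (x : ℝ → E)
    (hxD : ∀ t, 0 ≤ t → x t ∈ D)
    (hx' : ∀ t, 0 ≤ t → HasDerivAt x (f (x t)) t)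
    (hK : ∀ t, 0 ≤ t → x t ∈ Metric.closedBall (0:E) r) :
    Tendsto x atTop (𝓝 0) := by
  set K := Metric.closedBall (0:E) r with hKdef
  have hKc : IsCompact K := isCompact_closedBall 0 r
  have hKD : K ⊆ D := hrD
  -- basic facts about V
  have hVnn : ∀ y ∈ D, 0 ≤ V y := by
    intro y hy
    rcases eq_or_ne y 0 with rfl | h
    · rw [hV0]
    · exact (hVpos y hy h).le
  -- f is continuous at points of D
  have hfc : ∀ y ∈ D, ContinuousAt f y := by
    intro y hy
    obtain ⟨L, U, hU, hL⟩ := hfl y hy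
    exact (hL.continuousOn.continuousWithinAt (mem_of_mem_nhds hU)).continuousAt hU
  have hfK : ContinuousOn f K := fun y hy => (hfc y (hKD hy)).continuousWithinAt
  -- bound on f over K
  obtain ⟨M₀, hM₀⟩ := hKc.exists_bound_of_continuousOn hfK
  set M := max M₀ 0 with hMdef
  have hM : ∀ y ∈ K, ‖f y‖ ≤ M := fun y hy => (hM₀ y hy).trans (le_max_left _ _)
  have hM0 : 0 ≤ M := le_max_right _ _
  -- x is M-Lipschitz on [0,∞)
  have hxLip : ∀ a b : ℝ, 0 ≤ a → 0 ≤ b → ‖x b - x a‖ ≤ M * ‖b - a‖ := by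
    intro a b ha hb
    exact Convex.norm_image_sub_le_of_norm_hasDerivWithin_le
      (f' := fun t => f (x t))
      (fun t ht => (hx' t ht).hasDerivWithinAt)
      (fun t ht => hM _ (hK t ht)) (convex_Ici 0) ha hb
  -- uniform continuity of f on K
  have hfu := Metric.uniformContinuousOn_iff.mp (hKc.uniformContinuousOn_of_continuous hfK)
  -- the nonincreasing limit
  set G : ℝ → ℝ := fun t => V (x (max t 0)) with hGdef
  have hGanti : Antitone G := by
    intro s t hst
    exact lyap_mono D hD f V hVc hV0 hdec x hxD hx' (max s 0) (max t 0)
      (le_max_right _ _) (max_le_max hst le_rfl)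
  have hGnn : ∀ t, 0 ≤ G t := fun t => hVnn _ (hxD _ (le_max_right _ _))
  have hGbdd : BddBelow (Set.range G) := ⟨0, by rintro _ ⟨t, rfl⟩; exact hGnn t⟩
  set c := ⨅ t, G t with hcdef
  have htend : Tendsto G atTop (𝓝 c) := tendsto_atTop_ciInf hGanti hGbdd
  have hc0 : 0 ≤ c := le_ciInf hGnn
  rcases hc0.eq_or_lt with hc | hc
  · -- c = 0 : convergence to the origin
    rw [NormedAddCommGroup.tendsto_nhds_zero]
    intro η hη
    set A := K ∩ {y : E | η ≤ ‖y‖} with hAdef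
    rcases Set.eq_empty_or_nonempty A with hA | hA
    · filter_upwards [eventually_ge_atTop (0:ℝ)] with t ht
      by_contra hge
      push_neg at hge
      exact Set.eq_empty_iff_forall_notMem.mp hA (x t) ⟨hK t ht, hge⟩
    · have hAc : IsCompact A := hKc.inter_right (isClosed_le continuous_const continuous_norm)
      obtain ⟨y₁, hy₁A, hy₁min⟩ := hAc.exists_isMinOn hA
        (hVc.mono ((Set.inter_subset_left).trans hKD))
      have hy₁D : y₁ ∈ D := hKD hy₁A.1
      have hy₁n : y₁ ≠ 0 := by
        intro h
        have h2 : η ≤ ‖y₁‖ := hy₁A.2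
        rw [h, norm_zero] at h2
        exact absurd h2 (not_le.mpr hη)
      have hμ : 0 < V y₁ := hVpos y₁ hy₁D hy₁n
      have hev : ∀ᶠ t in atTop, G t < V y₁ := by
        have : Set.Iio (V y₁) ∈ 𝓝 c := Iio_mem_nhds (hc ▸ hμ)
        exact htend this
      filter_upwards [hev, eventually_ge_atTop (0:ℝ)] with t hGt ht
      by_contra hge
      push_neg at hge
      have hxA : x t ∈ A := ⟨hK t ht, (hge : η ≤ ‖x t‖)⟩
      have : V y₁ ≤ V (x t) := hy₁min hxA
      have hGeq : G t = V (x t) := by rw [hGdef]; simp [max_eq_left ht]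
      rw [hGeq] at hGt
      linarith
  · -- c > 0 : contradiction via a limit solution
    exfalso
    set U : Ultrafilter ℕ := Ultrafilter.of atTop with hUdef
    have hU : (U : Filter ℕ) ≤ atTop := Ultrafilter.of_le _
    have hev0 : ∀ τ : ℝ, ∀ᶠ n : ℕ in atTop, 0 ≤ (n:ℝ) + τ := by
      intro τ
      exact (tendsto_atTop_add_const_right _ τ tendsto_natCast_atTop_atTop).eventually_ge_atTop 0
    have hexists : ∀ τ : ℝ, ∃ a ∈ K, Tendsto (fun n : ℕ => x ((n:ℝ) + τ)) U (𝓝 a) := by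
      intro τ
      have hmem : K ∈ (U.map (fun n : ℕ => x ((n:ℝ) + τ))) :=
        hU ((hev0 τ).mono (fun n hn => hK _ hn))
      exact hKc.ultrafilter_le_nhds (U.map _) (le_principal_iff.mpr hmem)
    choose y hyK hyT using hexists
    have hyD : ∀ τ, y τ ∈ D := fun τ => hKD (hyK τ)
    have hVy : ∀ τ, V (y τ) = c := by
      intro τ
      have h1 : Tendsto (fun n : ℕ => V (x ((n:ℝ) + τ))) U (𝓝 (V (y τ))) :=
        ((hVc.continuousAt (hD.mem_nhds (hyD τ))).tendsto).comp (hyT τ)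
      have h2 : Tendsto (fun n : ℕ => V (x ((n:ℝ) + τ))) atTop (𝓝 c) := by
        have h3 : Tendsto (fun n : ℕ => G ((n:ℝ) + τ)) atTop (𝓝 c) :=
          htend.comp (tendsto_atTop_add_const_right _ τ tendsto_natCast_atTop_atTop)
        refine h3.congr' ?_
        filter_upwards [hev0 τ] with n hn
        rw [hGdef]
        simp [max_eq_left hn]
      exact tendsto_nhds_unique h1 (h2.mono_left hU)
    have hy0 : y 0 ≠ 0 := by
      intro h
      have h2 := hVy 0
      rw [h, hV0] at h2
      exact hc.ne h2
    have hy' : ∀ τ : ℝ, HasDerivAt y (f (y τ)) τ := by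
      intro τ
      rw [hasDerivAt_iff_isLittleO, Asymptotics.isLittleO_iff]
      intro ε hε
      obtain ⟨δ₁, hδ₁0, hδ₁⟩ := hfu ε hε
      have hb : 0 < δ₁ / (2 * (M + 1)) := by positivity
      filter_upwards [Metric.ball_mem_nhds τ hb] with w hw
      set h := w - τ with hh
      have hhb : |h| < δ₁ / (2 * (M + 1)) := by
        rw [Metric.mem_ball, Real.dist_eq] at hw
        exact hw
      have key : ∀ᶠ n : ℕ in (U : Filter ℕ),
          ‖x ((n:ℝ) + (τ + h)) - x ((n:ℝ) + τ) - h • f (y τ)‖ ≤ ε * |h| := by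
        have hnear : ∀ᶠ n : ℕ in (U : Filter ℕ), dist (x ((n:ℝ) + τ)) (y τ) < δ₁ / 2 :=
          Metric.tendsto_nhds.mp (hyT τ) (δ₁ / 2) (by positivity)
        have hbig : ∀ᶠ n : ℕ in (U : Filter ℕ), |h| ≤ (n:ℝ) + τ := by
          apply hU
          exact (tendsto_atTop_add_const_right _ τ tendsto_natCast_atTop_atTop).eventually_ge_atTop _
        filter_upwards [hnear, hbig] with n hn hbn
        set a : ℝ := (n:ℝ) + τ with ha
        have habs1 := abs_nonneg h
        have habs2 := le_abs_self h
        have habs3 := neg_abs_le h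
        have hsub : Set.uIcc a (a + h) ⊆ Set.Ici (0:ℝ) := by
          intro σ hσ
          rw [Set.mem_uIcc] at hσ
          simp only [Set.mem_Ici]
          rcases hσ with ⟨h1, h2⟩ | ⟨h1, h2⟩ <;> linarith
        have hdist : ∀ σ ∈ Set.uIcc a (a + h), ‖f (x σ) - f (y τ)‖ ≤ ε := by
          intro σ hσ
          have hσ0 : (0:ℝ) ≤ σ := hsub hσ
          have hσa : |σ - a| ≤ |h| := by
            rw [Set.mem_uIcc] at hσ
            rw [abs_le]
            rcases hσ with ⟨h1, h2⟩ | ⟨h1, h2⟩ <;> constructor <;> linarith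
          have hd1 : ‖x σ - x a‖ ≤ M * |h| := by
            have := hxLip a σ (by linarith) hσ0
            rw [Real.norm_eq_abs] at this
            calc ‖x σ - x a‖ ≤ M * |σ - a| := this
              _ ≤ M * |h| := by nlinarith
          have hMh : M * |h| < δ₁ / 2 := by
            have h1 : M * |h| ≤ (M + 1) * |h| := by nlinarith
            have h2 : (M + 1) * |h| < (M + 1) * (δ₁ / (2 * (M + 1))) := by
              apply mul_lt_mul_of_pos_left hhb
              linarith
            have h3 : (M + 1) * (δ₁ / (2 * (M + 1))) = δ₁ / 2 := by
              field_simp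
            linarith
          have hdxy : dist (x σ) (y τ) < δ₁ := by
            calc dist (x σ) (y τ) ≤ dist (x σ) (x a) + dist (x a) (y τ) := dist_triangle _ _ _
              _ = ‖x σ - x a‖ + dist (x a) (y τ) := by rw [dist_eq_norm]
              _ < M * |h| + δ₁ / 2 := by linarith [hn]
              _ < δ₁ := by linarith
          have := hδ₁ (x σ) (hK σ hσ0) (y τ) (hyK τ) hdxy
          rw [dist_eq_norm] at this
          exact this.le
        have hz : ∀ σ ∈ Set.uIcc a (a + h),
            HasDerivWithinAt (fun σ => x σ - σ • f (y τ)) (f (x σ) - f (y τ))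
              (Set.uIcc a (a + h)) σ := by
          intro σ hσ
          have h1 : HasDerivAt (fun σ : ℝ => σ • f (y τ)) (f (y τ)) σ := by
            have := (hasDerivAt_id σ).smul_const (f (y τ))
            rwa [one_smul] at this
          exact ((hx' σ (hsub hσ)).sub h1).hasDerivWithinAt
        have hmvt := Convex.norm_image_sub_le_of_norm_hasDerivWithin_le hz hdist
          (convex_uIcc _ _) Set.left_mem_uIcc Set.right_mem_uIcc
        have heq1 : (x (a + h) - (a + h) • f (y τ)) - (x a - a • f (y τ))
            = x ((n:ℝ) + (τ + h)) - x ((n:ℝ) + τ) - h • f (y τ) := by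
          rw [show (n:ℝ) + (τ + h) = a + h by rw [ha]; ring, ← ha]
          module
        have heq2 : ‖(a + h) - a‖ = |h| := by
          rw [show a + h - a = h by ring, Real.norm_eq_abs]
        rw [heq1, heq2] at hmvt
        exact hmvt
      have hlim : Tendsto (fun n : ℕ => x ((n:ℝ) + (τ + h)) - x ((n:ℝ) + τ) - h • f (y τ)) U
          (𝓝 (y (τ + h) - y τ - h • f (y τ))) :=
        ((hyT (τ + h)).sub (hyT τ)).sub tendsto_const_nhds
      have hfin := le_of_tendsto hlim.norm key
      have hw' : τ + h = w := by rw [hh]; ring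
      rw [hw'] at hfin
      rwa [Real.norm_eq_abs]
    have hfinal := hdec y (fun t _ => hyD t) (fun t _ => hy' t) 0 1 le_rfl one_pos hy0
    rw [hVy 0, hVy 1] at hfinal
    exact lt_irrefl c hfinal

/-- Stability core: trajectories starting close enough stay in the ball of radius `ρ`. -/
lemma lyap_stab [Nontrivial E] [ProperSpace E]
    (D : Set E) (hD : IsOpen D) (h0D : (0:E) ∈ D)
    (f : E → E) (V : E → ℝ)
    (hVc : ContinuousOn V D) (hV0 : V 0 = 0)
    (hVpos : ∀ x ∈ D, x ≠ 0 → 0 < V x)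
    (hdec : ∀ x : ℝ → E,
      (∀ t, 0 ≤ t → x t ∈ D) → (∀ t, 0 ≤ t → HasDerivAt x (f (x t)) t) →
      ∀ s t, 0 ≤ s → s < t → x s ≠ 0 → V (x t) < V (x s))
    (ρ : ℝ) (hρ : 0 < ρ) (hρD : Metric.closedBall 0 ρ ⊆ D) :
    ∃ δ > (0:ℝ), ∀ x : ℝ → E,
      (∀ t, 0 ≤ t → x t ∈ D) → (∀ t, 0 ≤ t → HasDerivAt x (f (x t)) t) →
      ‖x 0‖ < δ → ∀ t, 0 ≤ t → ‖x t‖ < ρ := by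
  -- minimum of V on the sphere of radius ρ
  obtain ⟨y₀, hy₀s, hy₀min⟩ := (isCompact_sphere (0:E) ρ).exists_isMinOn
    (NormedSpace.sphere_nonempty.mpr hρ.le)
    (hVc.mono ((Metric.sphere_subset_closedBall).trans hρD))
  have hy₀D : y₀ ∈ D := hρD (Metric.sphere_subset_closedBall hy₀s)
  have hy₀n : y₀ ≠ 0 := by
    intro h
    rw [h, mem_sphere_zero_iff_norm, norm_zero] at hy₀s
    exact hρ.ne' hy₀s.symm
  set m := V y₀ with hm
  have hm0 : 0 < m := hVpos y₀ hy₀D hy₀n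
  -- continuity of V at 0 gives δ₁
  have hVat : ContinuousAt V 0 := hVc.continuousAt (hD.mem_nhds h0D)
  obtain ⟨δ₁, hδ₁0, hδ₁⟩ := Metric.continuousAt_iff.mp hVat m hm0
  refine ⟨min δ₁ ρ, lt_min hδ₁0 hρ, ?_⟩
  intro x hxD hx' hx0 t ht
  by_contra hge
  push_neg at hge
  -- IVT: some τ ∈ [0, t] with ‖x τ‖ = ρ
  have hcont : ContinuousOn (fun τ => ‖x τ‖) (Set.Icc 0 t) := fun τ hτ =>
    ((hx' τ hτ.1).continuousAt.norm).continuousWithinAt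
  have hx0ρ : ‖x 0‖ < ρ := hx0.trans_le (min_le_right _ _)
  have hmem : ρ ∈ Set.Icc ‖x 0‖ ‖x t‖ := ⟨hx0ρ.le, hge⟩
  obtain ⟨τ, hτI, hτv⟩ := intermediate_value_Icc ht hcont hmem
  simp only at hτv
  -- V (x τ) ≥ m
  have h1 : m ≤ V (x τ) := hy₀min (by rwa [mem_sphere_zero_iff_norm])
  -- but V (x τ) ≤ V (x 0) < m
  have h2 : V (x τ) ≤ V (x 0) :=
    lyap_mono D hD f V hVc hV0 hdec x hxD hx' 0 τ le_rfl hτI.1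
  have h3 : V (x 0) < m := by
    have := hδ₁ (show dist (x 0) 0 < δ₁ by
      rw [dist_zero_right]; exact hx0.trans_le (min_le_left _ _))
    rw [Real.dist_eq, hV0, sub_zero] at this
    exact lt_of_abs_lt this
  linarith


/-- Standard (nonsmooth) Lyapunov theorem: if `V` is continuous on an open
neighborhood `D` of `0`, positive definite, and strictly decreasing along every
nonzero solution of `ẋ = f x` remaining in `D` (with `f` locally Lipschitz on
`D` and `f 0 = 0`), then the origin is asymptotically stable: solutions starting
close enough stay arbitrarily close and converge to `0`. -/
theorem lyapunov_asymptotic_stability {n : ℕ}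
    (D : Set (EuclideanSpace ℝ (Fin n))) (hD : IsOpen D) (h0D : (0 : EuclideanSpace ℝ (Fin n)) ∈ D)
    (f : EuclideanSpace ℝ (Fin n) → EuclideanSpace ℝ (Fin n))
    (hf0 : f 0 = 0)
    (hfl : ∀ x ∈ D, ∃ (L : NNReal) (U : Set (EuclideanSpace ℝ (Fin n))),
      U ∈ 𝓝 x ∧ LipschitzOnWith L f U)
    (V : EuclideanSpace ℝ (Fin n) → ℝ)
    (hVc : ContinuousOn V D) (hV0 : V 0 = 0)
    (hVpos : ∀ x ∈ D, x ≠ 0 → 0 < V x)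
    (hdec : ∀ x : ℝ → EuclideanSpace ℝ (Fin n),
      (∀ t, 0 ≤ t → x t ∈ D) → (∀ t, 0 ≤ t → HasDerivAt x (f (x t)) t) →
      ∀ s t, 0 ≤ s → s < t → x s ≠ 0 → V (x t) < V (x s)) :
    (∀ ε > (0 : ℝ), ∃ δ > (0 : ℝ),
      ∀ x : ℝ → EuclideanSpace ℝ (Fin n),
        (∀ t, 0 ≤ t → x t ∈ D) → (∀ t, 0 ≤ t → HasDerivAt x (f (x t)) t) →
        ‖x 0‖ < δ → ∀ t, 0 ≤ t → ‖x t‖ < ε) ∧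
    (∃ δ > (0 : ℝ),
      ∀ x : ℝ → EuclideanSpace ℝ (Fin n),
        (∀ t, 0 ≤ t → x t ∈ D) → (∀ t, 0 ≤ t → HasDerivAt x (f (x t)) t) →
        ‖x 0‖ < δ → Tendsto x atTop (𝓝 0)) := by
  rcases subsingleton_or_nontrivial (EuclideanSpace ℝ (Fin n)) with hsub | hnt
  · constructor
    · intro ε hε
      refine ⟨1, one_pos, ?_⟩
      intro x _ _ _ t _
      rw [Subsingleton.elim (x t) 0, norm_zero]
      exact hε
    · refine ⟨1, one_pos, ?_⟩
      intro x _ _ _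
      have : x = fun _ => 0 := funext fun t => Subsingleton.elim _ _
      rw [this]
      exact tendsto_const_nhds
  · -- choose r with closedBall 0 r ⊆ D
    obtain ⟨r, hr0, hrD⟩ : ∃ r > (0:ℝ), Metric.closedBall (0:EuclideanSpace ℝ (Fin n)) r ⊆ D := by
      obtain ⟨r, hr0, hrD⟩ := Metric.isOpen_iff.mp hD 0 h0D
      exact ⟨r / 2, by linarith, (Metric.closedBall_subset_ball (by linarith)).trans hrD⟩
    constructor
    · intro ε hε
      have hρ : (0:ℝ) < min r ε := lt_min hr0 hε
      have hρD : Metric.closedBall (0:EuclideanSpace ℝ (Fin n)) (min r ε) ⊆ D :=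
        (Metric.closedBall_subset_closedBall (min_le_left _ _)).trans hrD
      obtain ⟨δ, hδ0, hδ⟩ := lyap_stab D hD h0D f V hVc hV0 hVpos hdec _ hρ hρD
      refine ⟨δ, hδ0, ?_⟩
      intro x hxD hx' hx0 t ht
      exact (hδ x hxD hx' hx0 t ht).trans_le (min_le_right _ _)
    · obtain ⟨δ, hδ0, hδ⟩ := lyap_stab D hD h0D f V hVc hV0 hVpos hdec r hr0 hrD
      refine ⟨δ, hδ0, ?_⟩
      intro x hxD hx' hx0
      exact lyap_attract D hD f hfl V hVc hV0 hVpos hdec r hrD x hxD hx'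
        (fun t ht => Metric.mem_closedBall.mpr
          (by rw [dist_zero_right]; exact (hδ x hxD hx' hx0 t ht).le))
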